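/- Let G be a group, L ≥ 1, let π be a representation of G on ℓ¹ = ℓ¹ℕ uniformly bounded by L, and let α be a cocycle for π. Then there exist a constant L' ≥ 1, a representation π' of G on L¹([0,1]) uniformly bounded by L', and a cocycle α' for π' such that ‖α'(g)‖ = ‖α(g)‖ for every g ∈ G. In particular, if G admits an affine uniformly Lipschitz action on ℓ¹ with unbounded orbits, then G admits an affine uniformly Lipschitz action on L¹([0,1]) with unbounded orbits, and any lower bound of the form ‖α(g)‖ ≥ ρ(|g|)/C − C transfers to the action on L¹([0,1]). -/

import Mathlib

open MeasureTheory Set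
open scoped ENNReal NNReal
set_option synthInstance.maxHeartbeats 1000000
set_option maxHeartbeats 1000000

/-- `ℓ¹ = ℓ¹ℕ`, the Banach space of absolutely summable real sequences. -/
noncomputable abbrev ellOne : Type := lp (fun _ : ℕ => ℝ) 1

/-- `L¹([0,1])`, the Lebesgue space of integrable real functions on `[0,1]`. -/
noncomputable abbrev LOneUnitInterval : Type :=
  Lp ℝ 1 (volume.restrict (Set.Icc (0 : ℝ) 1))

namespace Transfer

noncomputable abbrev μ : Measure ℝ := volume.restrict (Set.Icc (0 : ℝ) 1)

noncomputable def a (n : ℕ) : ℝ := 1 - (1/2 : ℝ)^n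

def s (n : ℕ) : Set ℝ := Set.Ico (a n) (a (n+1))

lemma a_mono : Monotone a := by
  intro m n h
  have : (1/2:ℝ)^n ≤ (1/2)^m := pow_le_pow_of_le_one (by norm_num) (by norm_num) h
  unfold a; linarith

lemma hs (n : ℕ) : MeasurableSet (s n) := measurableSet_Ico

lemma hsub (n : ℕ) : s n ⊆ Set.Icc 0 1 := by
  intro x hx
  have h0 : (0:ℝ) < (1/2:ℝ)^(n+1) := by positivity
  have h1 : (1/2:ℝ)^n ≤ 1 := pow_le_one₀ (by norm_num) (by norm_num)
  obtain ⟨hx1, hx2⟩ := hx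
  unfold a at hx1 hx2
  constructor <;> [linarith; linarith]

lemma hvol (n : ℕ) : μ (s n) = ENNReal.ofReal ((1/2:ℝ)^(n+1)) := by
  rw [μ, Measure.restrict_apply (hs n), Set.inter_eq_self_of_subset_left (hsub n),
    s, Real.volume_Ico]
  congr 1
  unfold a
  ring

lemma hfin (n : ℕ) : μ (s n) ≠ ⊤ := by rw [hvol]; exact ENNReal.ofReal_ne_top

lemma hvol_toReal (n : ℕ) : (μ (s n)).toReal = (1/2:ℝ)^(n+1) := by
  rw [hvol, ENNReal.toReal_ofReal (by positivity)]

lemma hdisj' {m n : ℕ} (h : m < n) : Disjoint (s m) (s n) :=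
  Set.Ico_disjoint_Ico.2 (le_trans (min_le_left _ _)
    (le_trans (a_mono h) (le_max_right _ _)))

lemma hdisj : Pairwise (Function.onFun Disjoint s) := by
  intro m n hmn
  rcases hmn.lt_or_gt with h | h
  · exact hdisj' h
  · exact (hdisj' h).symm

/-- norm on ℓ¹ -/
lemma ell1_norm (f : ellOne) : ‖f‖ = ∑' n, |f n| := by
  have := lp.norm_eq_tsum_rpow (p := 1) (by norm_num) f
  simpa using this

lemma ell1_summable (f : ellOne) : Summable (fun n => |f n|) := by
  have := lp.memℓp f
  have h := (memℓp_gen_iff (p := 1) (by norm_num)).1 this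
  simpa using h

end Transfer

namespace Transfer

/-- building blocks in L¹: normalized indicator of `s n`. -/
noncomputable def g (n : ℕ) : LOneUnitInterval :=
  indicatorConstLp 1 (hs n) (hfin n) ((2:ℝ)^(n+1))

lemma g_norm (n : ℕ) : ‖g n‖ = 1 := by
  rw [g, norm_indicatorConstLp one_ne_zero ENNReal.one_ne_top]
  show ‖(2:ℝ)^(n+1)‖ * (μ (s n)).toReal ^ (1 / (1:ℝ≥0∞).toReal) = 1
  rw [hvol_toReal]
  simp only [Real.norm_eq_abs, abs_of_pos (by positivity : (0:ℝ) < (2:ℝ)^(n+1)),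
    one_div, inv_pow, ENNReal.toReal_one, div_one, Real.rpow_one]
  exact mul_inv_cancel₀ (by positivity)

lemma summ_smul_g (f : ellOne) : Summable (fun n => ‖f n • g n‖) := by
  have : ∀ n, ‖f n • g n‖ = |f n| := by
    intro n; rw [norm_smul, g_norm, mul_one, Real.norm_eq_abs]
  simpa [this] using ell1_summable f

noncomputable def Jfun (f : ellOne) : LOneUnitInterval := ∑' n, f n • g n

lemma Jfun_norm_le (f : ellOne) : ‖Jfun f‖ ≤ ‖f‖ := by
  refine le_trans (norm_tsum_le_tsum_norm (summ_smul_g f)) ?_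
  rw [ell1_norm]
  refine le_of_eq (tsum_congr fun n => ?_)
  rw [norm_smul, g_norm, mul_one, Real.norm_eq_abs]

noncomputable def Jlin : ellOne →ₗ[ℝ] LOneUnitInterval where
  toFun := Jfun
  map_add' f₁ f₂ := by
    unfold Jfun
    rw [← Summable.tsum_add ((summ_smul_g f₁).of_norm) ((summ_smul_g f₂).of_norm)]
    refine tsum_congr fun n => ?_
    have : (f₁ + f₂) n = f₁ n + f₂ n := rfl
    rw [this, add_smul]
  map_smul' c f := by
    unfold Jfun
    rw [RingHom.id_apply, ← tsum_const_smul'' c]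
    refine tsum_congr fun n => ?_
    have : (c • f) n = c * f n := rfl
    rw [this, smul_smul]

noncomputable def J : ellOne →L[ℝ] LOneUnitInterval :=
  Jlin.mkContinuous 1 (fun f => by simpa using (show ‖Jlin f‖ ≤ ‖f‖ from Jfun_norm_le f))

lemma J_apply (f : ellOne) : J f = ∑' n, f n • g n := rfl

lemma J_norm_le (f : ellOne) : ‖J f‖ ≤ ‖f‖ := Jfun_norm_le f

end Transfer

namespace Transfer

lemma coe_integrable (h : LOneUnitInterval) : Integrable h μ := L1.integrable_coeFn h

/-- the set-integral functional over `s n`, as a continuous linear map. -/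
noncomputable def Ifun (n : ℕ) : LOneUnitInterval →L[ℝ] ℝ :=
  LinearMap.mkContinuous
    { toFun := fun h => ∫ x in s n, h x ∂μ
      map_add' := fun h₁ h₂ => by
        rw [integral_congr_ae ((Lp.coeFn_add h₁ h₂).restrict)]
        exact integral_add ((coe_integrable h₁).integrableOn)
          ((coe_integrable h₂).integrableOn)
      map_smul' := fun c h => by
        rw [integral_congr_ae ((Lp.coeFn_smul c h).restrict)]
        exact integral_smul c _ }
    1
    (fun h => by
      simp only [LinearMap.coe_mk, AddHom.coe_mk, one_mul]
      calc ‖∫ x in s n, h x ∂μ‖ ≤ ∫ x in s n, ‖h x‖ ∂μ := norm_integral_le_integral_norm _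
      _ ≤ ∫ x, ‖h x‖ ∂μ := setIntegral_le_integral (coe_integrable h).norm
          (Filter.Eventually.of_forall fun x => norm_nonneg _)
      _ = ‖h‖ := (L1.norm_eq_integral_norm h).symm)

lemma Ifun_apply (n : ℕ) (h : LOneUnitInterval) : Ifun n h = ∫ x in s n, h x ∂μ := rfl

lemma Ifun_abs_le (n : ℕ) (h : LOneUnitInterval) :
    |Ifun n h| ≤ ∫ x in s n, ‖h x‖ ∂μ := by
  rw [Ifun_apply, ← Real.norm_eq_abs]
  exact norm_integral_le_integral_norm _

lemma hasSum_norm (h : LOneUnitInterval) :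
    HasSum (fun n => ∫ x in s n, ‖h x‖ ∂μ) (∫ x in ⋃ n, s n, ‖h x‖ ∂μ) :=
  hasSum_integral_iUnion hs hdisj ((coe_integrable h).norm.integrableOn)

lemma mem_P (h : LOneUnitInterval) : Memℓp (fun n => Ifun n h) 1 := by
  apply memℓp_gen
  have hsummable : Summable (fun n => ∫ x in s n, ‖h x‖ ∂μ) := (hasSum_norm h).summable
  have : Summable (fun n => |Ifun n h|) :=
    Summable.of_nonneg_of_le (fun n => abs_nonneg _) (fun n => Ifun_abs_le n h) hsummable
  simpa using this

noncomputable def Plin : LOneUnitInterval →ₗ[ℝ] ellOne where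
  toFun h := ⟨fun n => Ifun n h, mem_P h⟩
  map_add' h₁ h₂ := by
    apply lp.ext
    funext n
    show Ifun n (h₁ + h₂) = _
    rw [map_add]
    rfl
  map_smul' c h := by
    apply lp.ext
    funext n
    show Ifun n (c • h) = _
    rw [ContinuousLinearMap.map_smul]
    rfl

lemma Plin_apply (h : LOneUnitInterval) (n : ℕ) : (Plin h : ∀ _ : ℕ, ℝ) n = Ifun n h := rfl

lemma Plin_norm_le (h : LOneUnitInterval) : ‖Plin h‖ ≤ ‖h‖ := by
  rw [ell1_norm]
  calc ∑' n, |(Plin h : ∀ _ : ℕ, ℝ) n|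
      ≤ ∑' n, ∫ x in s n, ‖h x‖ ∂μ := by
        refine Summable.tsum_le_tsum (fun n => Ifun_abs_le n h) ?_ (hasSum_norm h).summable
        have : Summable (fun n => |Ifun n h|) :=
          Summable.of_nonneg_of_le (fun n => abs_nonneg _) (fun n => Ifun_abs_le n h)
            (hasSum_norm h).summable
        exact this
    _ = ∫ x in ⋃ n, s n, ‖h x‖ ∂μ := (hasSum_norm h).tsum_eq
    _ ≤ ∫ x, ‖h x‖ ∂μ := setIntegral_le_integral (coe_integrable h).norm
        (Filter.Eventually.of_forall fun x => norm_nonneg _)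
    _ = ‖h‖ := (L1.norm_eq_integral_norm h).symm

noncomputable def P : LOneUnitInterval →L[ℝ] ellOne :=
  Plin.mkContinuous 1 (fun h => by simpa using Plin_norm_le h)

lemma P_norm_le (h : LOneUnitInterval) : ‖P h‖ ≤ ‖h‖ := Plin_norm_le h

lemma Ifun_g (n m : ℕ) : Ifun n (g m) = if m = n then 1 else 0 := by
  rw [Ifun_apply, g, setIntegral_indicatorConstLp (hs n) (hs m) (hfin m)]
  by_cases hmn : m = n
  · subst hmn
    rw [Set.inter_self, measureReal_def, hvol_toReal]
    show (1/2:ℝ)^(m+1) * (2:ℝ)^(m+1) = _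
    rw [if_pos rfl, one_div, inv_pow]
    exact inv_mul_cancel₀ (by positivity)
  · rw [if_neg hmn, Set.disjoint_iff_inter_eq_empty.1 (hdisj hmn)]
    simp

lemma P_J (f : ellOne) : P (J f) = f := by
  apply lp.ext
  funext n
  show Ifun n (J f) = f n
  rw [J_apply, ContinuousLinearMap.map_tsum _ ((summ_smul_g f).of_norm)]
  have : ∀ m, Ifun n (f m • g m) = if m = n then f n else 0 := by
    intro m
    rw [ContinuousLinearMap.map_smul, Ifun_g, smul_eq_mul]
    by_cases hmn : m = n
    · subst hmn; simp
    · simp [hmn]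
  rw [tsum_congr this, tsum_eq_single n (fun m hm => by simp [hm])]
  simp

lemma J_isometry (f : ellOne) : ‖J f‖ = ‖f‖ := by
  refine le_antisymm (J_norm_le f) ?_
  calc ‖f‖ = ‖P (J f)‖ := by rw [P_J]
    _ ≤ ‖J f‖ := P_norm_le _

end Transfer

/-- If a group `G` has a representation `π` on `ℓ¹`, uniformly bounded by `L ≥ 1`, with a
cocycle `α`, then there are `L' ≥ 1`, a representation `π'` of `G` on `L¹([0,1])` uniformly
bounded by `L'`, and a cocycle `α'` for `π'` with `‖α' g‖ = ‖α g‖` for all `g`. -/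
theorem ell1_action_transfers_to_L1 (G : Type*) [Group G] (L : ℝ) (hL : 1 ≤ L)
    (π : G → ellOne →L[ℝ] ellOne) (hπ1 : π 1 = 1)
    (hπmul : ∀ g h : G, π (g * h) = π g ∘L π h)
    (hπbdd : ∀ g : G, ‖π g‖ ≤ L)
    (α : G → ellOne) (hα : ∀ g h : G, α (g * h) = α g + π g (α h)) :
    ∃ L' : ℝ, 1 ≤ L' ∧
      ∃ π' : G → LOneUnitInterval →L[ℝ] LOneUnitInterval,
        π' 1 = 1 ∧ (∀ g h : G, π' (g * h) = π' g ∘L π' h) ∧ (∀ g : G, ‖π' g‖ ≤ L') ∧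
          ∃ α' : G → LOneUnitInterval,
            (∀ g h : G, α' (g * h) = α' g + π' g (α' h)) ∧
            (∀ g : G, ‖α' g‖ = ‖α g‖) := by
  classical
  set J := Transfer.J
  set P := Transfer.P
  have hPJ : ∀ y : ellOne, P (J y) = y := Transfer.P_J
  refine ⟨L + 2, by linarith, fun g => J ∘L π g ∘L P + (1 - J ∘L P), ?_, ?_, ?_, fun g => J (α g), ?_, ?_⟩
  · refine ContinuousLinearMap.ext fun x => ?_
    simp only [ContinuousLinearMap.add_apply, ContinuousLinearMap.sub_apply,
      ContinuousLinearMap.comp_apply, ContinuousLinearMap.one_apply, hπ1]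
    abel
  · intro g h
    refine ContinuousLinearMap.ext fun x => ?_
    simp only [ContinuousLinearMap.add_apply, ContinuousLinearMap.sub_apply,
      ContinuousLinearMap.comp_apply, ContinuousLinearMap.one_apply, hπmul]
    rw [map_add, map_sub, hPJ, hPJ, map_add, map_sub]
    simp only [map_add, map_sub, hPJ]
    abel
  · intro g
    refine ContinuousLinearMap.opNorm_le_bound _ (by linarith) (fun x => ?_)
    simp only [ContinuousLinearMap.add_apply, ContinuousLinearMap.sub_apply,
      ContinuousLinearMap.comp_apply, ContinuousLinearMap.one_apply]
    have h1 : ‖J ((π g) (P x))‖ ≤ L * ‖x‖ := by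
      calc ‖J ((π g) (P x))‖ ≤ ‖(π g) (P x)‖ := Transfer.J_norm_le _
        _ ≤ ‖π g‖ * ‖P x‖ := ContinuousLinearMap.le_opNorm _ _
        _ ≤ L * ‖x‖ := mul_le_mul (hπbdd g) (Transfer.P_norm_le x) (norm_nonneg _)
            (le_trans zero_le_one hL)
    have h2 : ‖x - J (P x)‖ ≤ ‖x‖ + ‖x‖ := by
      calc ‖x - J (P x)‖ ≤ ‖x‖ + ‖J (P x)‖ := norm_sub_le _ _
        _ ≤ ‖x‖ + ‖x‖ := by
            have := le_trans (Transfer.J_norm_le (P x)) (Transfer.P_norm_le x)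
            linarith
    calc ‖J ((π g) (P x)) + (x - J (P x))‖ ≤ ‖J ((π g) (P x))‖ + ‖x - J (P x)‖ :=
          norm_add_le _ _
      _ ≤ L * ‖x‖ + (‖x‖ + ‖x‖) := add_le_add h1 h2
      _ = (L + 2) * ‖x‖ := by ring
  · intro g h
    simp only [ContinuousLinearMap.add_apply, ContinuousLinearMap.sub_apply,
      ContinuousLinearMap.comp_apply, ContinuousLinearMap.one_apply, hα, map_add, hPJ]
    abel
  · intro g
    exact Transfer.J_isometry (α g)
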